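/- Let v be a monotone TU-game on N, S ⊆ N with |S| ≥ 2, and let p, q be families of probability distributions (p_S on the 2-partitions of S, q_S on subsets of N∖S). Then -Φ^v_q(S) ≤ C^v_{p,q}(S) ≤ Φ^v_q(S), where Φ^v_q(S) = Σ_{T⊆N∖S} q_S(T)·(v(S∪T) - v(T)) is the probabilistic generalized value and C^v_{p,q}(S) = Σ_{T⊆N∖S} q_S(T)·A^v_p(S,T) is the coopetition index. -/
import Mathlib


open Finset

/-- The set of unordered 2-partitions of `S` into two nonempty disjoint parts. -/
def Pi2 {ι : Type*} [DecidableEq ι] (S : Finset ι) : Finset (Finset (Finset ι)) :=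
  (S.powerset.filter fun R => R ≠ ∅ ∧ R ≠ S).image fun R => {R, S \ R}

/-- The attitude of coalition `S` towards `T` under internal distribution `p` on `Pi2 S`. -/
def attitude {ι : Type*} [DecidableEq ι] (v : Finset ι → ℝ) (p : Finset (Finset ι) → ℝ)
    (S T : Finset ι) : ℝ :=
  v (S ∪ T) - v T - ∑ π ∈ Pi2 S, p π * ((∑ B ∈ π, v (B ∪ T)) - 2 * v T)

/-- The probabilistic generalized value of `S` in the game `v` on `N`,
under external distribution `q` on subsets of `N \ S`. -/
def genValue {ι : Type*} [DecidableEq ι] (v : Finset ι → ℝ) (q : Finset ι → ℝ)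
    (N S : Finset ι) : ℝ :=
  ∑ T ∈ (N \ S).powerset, q T * (v (S ∪ T) - v T)

/-- The coopetition index of `S` in the game `v` on `N`. -/
def coop {ι : Type*} [DecidableEq ι] (v : Finset ι → ℝ) (p : Finset (Finset ι) → ℝ)
    (q : Finset ι → ℝ) (N S : Finset ι) : ℝ :=
  ∑ T ∈ (N \ S).powerset, q T * attitude v p S T

lemma pi2_spec {ι : Type*} [DecidableEq ι] {S : Finset ι} {π : Finset (Finset ι)}
    (h : π ∈ Pi2 S) : π.card = 2 ∧ ∀ B ∈ π, B ⊆ S := by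
  simp only [Pi2, mem_image, mem_filter, mem_powerset] at h
  obtain ⟨R, ⟨hRS, hne, hneS⟩, rfl⟩ := h
  have hRne : R ≠ S \ R := by
    intro hEq
    obtain ⟨x, hx⟩ := Finset.nonempty_iff_ne_empty.2 hne
    have := hEq ▸ hx
    exact (Finset.mem_sdiff.1 this).2 hx
  refine ⟨Finset.card_pair hRne, ?_⟩
  intro B hB
  rcases Finset.mem_insert.1 hB with rfl | hB
  · exact hRS
  · rw [Finset.mem_singleton.1 hB]; exact Finset.sdiff_subset

lemma attitude_bounds {ι : Type*} [DecidableEq ι]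
    {N S : Finset ι} (v : Finset ι → ℝ) (p : Finset (Finset ι) → ℝ)
    (hmono : ∀ A B : Finset ι, A ⊆ B → B ⊆ N → v A ≤ v B)
    (hSN : S ⊆ N)
    (hp1 : ∑ π ∈ Pi2 S, p π = 1) (hp0 : ∀ π ∈ Pi2 S, 0 ≤ p π)
    {T : Finset ι} (hT : T ⊆ N \ S) :
    -(v (S ∪ T) - v T) ≤ attitude v p S T ∧ attitude v p S T ≤ v (S ∪ T) - v T := by
  have hTN : T ⊆ N := hT.trans (Finset.sdiff_subset)
  have hSTN : S ∪ T ⊆ N := Finset.union_subset hSN hTN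
  have key : ∀ π ∈ Pi2 S,
      0 ≤ (∑ B ∈ π, v (B ∪ T)) - 2 * v T ∧
      (∑ B ∈ π, v (B ∪ T)) - 2 * v T ≤ 2 * (v (S ∪ T) - v T) := by
    intro π hπ
    obtain ⟨hcard, hsub⟩ := pi2_spec hπ
    have hconst : (2 : ℝ) * v T = ∑ _B ∈ π, v T := by
      rw [Finset.sum_const, hcard]; push_cast; ring
    constructor
    · rw [hconst, ← Finset.sum_sub_distrib]
      apply Finset.sum_nonneg
      intro B hB
      have : v T ≤ v (B ∪ T) :=
        hmono T (B ∪ T) Finset.subset_union_right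
          (Finset.union_subset ((hsub B hB).trans hSN) hTN)
      linarith
    · have hle : (∑ B ∈ π, v (B ∪ T)) ≤ ∑ _B ∈ π, v (S ∪ T) := by
        apply Finset.sum_le_sum
        intro B hB
        exact hmono (B ∪ T) (S ∪ T)
          (Finset.union_subset_union_left (hsub B hB)) hSTN
      rw [Finset.sum_const, hcard] at hle
      rw [nsmul_eq_mul] at hle; push_cast at hle
      linarith
  have hsum0 : 0 ≤ ∑ π ∈ Pi2 S, p π * ((∑ B ∈ π, v (B ∪ T)) - 2 * v T) :=
    Finset.sum_nonneg fun π hπ => mul_nonneg (hp0 π hπ) (key π hπ).1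
  have hsum2 : (∑ π ∈ Pi2 S, p π * ((∑ B ∈ π, v (B ∪ T)) - 2 * v T))
      ≤ 2 * (v (S ∪ T) - v T) := by
    calc (∑ π ∈ Pi2 S, p π * ((∑ B ∈ π, v (B ∪ T)) - 2 * v T))
        ≤ ∑ π ∈ Pi2 S, p π * (2 * (v (S ∪ T) - v T)) :=
          Finset.sum_le_sum fun π hπ =>
            mul_le_mul_of_nonneg_left (key π hπ).2 (hp0 π hπ)
      _ = 2 * (v (S ∪ T) - v T) := by rw [← Finset.sum_mul, hp1, one_mul]
  unfold attitude
  constructor <;> linarith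

theorem coop_bounds {ι : Type*} [DecidableEq ι]
    (N S : Finset ι) (v : Finset ι → ℝ)
    (p : Finset (Finset ι) → ℝ) (q : Finset ι → ℝ)
    (hv0 : v ∅ = 0) (hmono : ∀ A B : Finset ι, A ⊆ B → B ⊆ N → v A ≤ v B)
    (hSN : S ⊆ N) (h2 : 2 ≤ S.card)
    (hp1 : ∑ π ∈ Pi2 S, p π = 1) (hp0 : ∀ π ∈ Pi2 S, 0 ≤ p π)
    (hq1 : ∑ T ∈ (N \ S).powerset, q T = 1) (hq0 : ∀ T ∈ (N \ S).powerset, 0 ≤ q T) :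
    -genValue v q N S ≤ coop v p q N S ∧ coop v p q N S ≤ genValue v q N S := by
  constructor
  · rw [genValue, ← Finset.sum_neg_distrib]
    apply Finset.sum_le_sum
    intro T hT
    have := (attitude_bounds v p hmono hSN hp1 hp0 (Finset.mem_powerset.1 hT)).1
    have hq := hq0 T hT
    calc -(q T * (v (S ∪ T) - v T)) = q T * (-(v (S ∪ T) - v T)) := by ring
      _ ≤ q T * attitude v p S T := mul_le_mul_of_nonneg_left this hq
  · apply Finset.sum_le_sum
    intro T hT
    exact mul_le_mul_of_nonneg_left
      (attitude_bounds v p hmono hSN hp1 hp0 (Finset.mem_powerset.1 hT)).2 (hq0 T hT)
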